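/- Let M ∈ ℂ^{2n×2n} be such that det(M + zMᵀ) ≠ 0 for all z ∈ ℂ with |z| = 1, and define the matrix 𝓘(M) = (1/(2πi)) ∮_{|z|=1} (M + zMᵀ)⁻¹ dz, the contour integral over the unit circle traversed counterclockwise (taken in the Banach algebra of 2n×2n complex matrices). Then the matrix P = 𝓘(M)·Mᵀ is idempotent, P² = P, and has rank n. -/

import Mathlib

open scoped Matrix

attribute [local instance] Matrix.frobeniusNormedAddCommGroup Matrix.frobeniusNormedSpace
attribute [local instance] Matrix.frobeniusNormedRing Matrix.frobeniusNormedAlgebra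

open Matrix Complex Metric MeasureTheory Polynomial Set

namespace IRP

variable {N : ℕ}

/-- the pencil -/
noncomputable abbrev phi (M : Matrix (Fin N) (Fin N) ℂ) (z : ℂ) :
    Matrix (Fin N) (Fin N) ℂ := M + z • Mᵀ

/-- the determinant polynomial -/
noncomputable def pp (M : Matrix (Fin N) (Fin N) ℂ) : Polynomial ℂ :=
  (M.map Polynomial.C + (Polynomial.X : Polynomial ℂ) • Mᵀ.map Polynomial.C).det

lemma eval_pp (M : Matrix (Fin N) (Fin N) ℂ) (z : ℂ) :
    (pp M).eval z = (phi M z).det := by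
  rw [pp, ← Polynomial.coe_evalRingHom, RingHom.map_det]
  congr 1
  ext i j
  simp only [Matrix.map_apply, Matrix.add_apply, Matrix.smul_apply, Polynomial.eval_add,
    Polynomial.eval_smul, Polynomial.eval_mul, Polynomial.eval_C, Polynomial.eval_X, smul_eq_mul,
    Matrix.transpose_apply, phi, RingHom.mapMatrix_apply, Polynomial.coe_evalRingHom]

lemma pp_funext (M : Matrix (Fin N) (Fin N) ℂ) {z : ℂ} (hz : z ≠ 0) :
    (pp M).eval z = z ^ N * (pp M).eval z⁻¹ := by
  rw [eval_pp, eval_pp]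
  have : z ^ N * (phi M z⁻¹).det = (z • phi M z⁻¹).det := by
    rw [Matrix.det_smul, Fintype.card_fin]
  rw [this]
  have h2 : z • phi M z⁻¹ = (phi M z)ᵀ := by
    simp only [phi, smul_add, smul_smul, mul_inv_cancel₀ hz, one_smul, Matrix.transpose_add,
      Matrix.transpose_smul, Matrix.transpose_transpose]
    exact add_comm _ _
  rw [h2, Matrix.det_transpose]

lemma isUnit_phi {M : Matrix (Fin N) (Fin N) ℂ} {z : ℂ} (hz : (phi M z).det ≠ 0) :
    IsUnit (phi M z) :=
  (Matrix.isUnit_iff_isUnit_det _).2 (isUnit_iff_ne_zero.2 hz)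

lemma resolvent_id (M : Matrix (Fin N) (Fin N) ℂ) {z w : ℂ} (hz : IsUnit (phi M z))
    (hw : IsUnit (phi M w)) :
    (phi M z)⁻¹ - (phi M w)⁻¹ = (w - z) • ((phi M z)⁻¹ * Mᵀ * (phi M w)⁻¹) := by
  have hz' := (Matrix.isUnit_iff_isUnit_det _).1 hz
  have hw' := (Matrix.isUnit_iff_isUnit_det _).1 hw
  have e1 : (phi M z)⁻¹ * (phi M w) * (phi M w)⁻¹ = (phi M z)⁻¹ := by
    rw [mul_assoc, Matrix.mul_nonsing_inv _ hw', mul_one]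
  have e2 : (phi M z)⁻¹ * (phi M z) * (phi M w)⁻¹ = (phi M w)⁻¹ := by
    rw [Matrix.nonsing_inv_mul _ hz', one_mul]
  calc (phi M z)⁻¹ - (phi M w)⁻¹
      = (phi M z)⁻¹ * (phi M w) * (phi M w)⁻¹ - (phi M z)⁻¹ * (phi M z) * (phi M w)⁻¹ := by
        rw [e1, e2]
    _ = (w - z) • ((phi M z)⁻¹ * Mᵀ * (phi M w)⁻¹) := by
        simp only [phi, mul_add, add_mul, Matrix.mul_smul, Matrix.smul_mul, sub_smul]
        abel

lemma jacobi (M : Matrix (Fin N) (Fin N) ℂ) {z : ℂ} (hz : (phi M z).det ≠ 0) :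
    ((pp M).derivative).eval z = (pp M).eval z * Matrix.trace ((phi M z)⁻¹ * Mᵀ) := by
  set B := (phi M z)⁻¹ * Mᵀ with hB
  set d := ((1 + (Polynomial.X : Polynomial ℂ) • B.map Polynomial.C).det).divX.divX with hd
  set q := Polynomial.C ((pp M).eval z) *
    (1 + Polynomial.C (Matrix.trace B) * Polynomial.X + d * Polynomial.X ^ 2) with hq
  have key : pp M = q.comp (Polynomial.X - Polynomial.C z) := by
    apply Polynomial.funext
    intro w
    rw [Polynomial.eval_comp]
    simp only [Polynomial.eval_sub, Polynomial.eval_X, Polynomial.eval_C, hq,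
      Polynomial.eval_mul, Polynomial.eval_add, Polynomial.eval_one, Polynomial.eval_pow]
    rw [show Polynomial.eval (w - z) d * (w - z) ^ 2
        = ((1 + (Polynomial.X : Polynomial ℂ) • B.map Polynomial.C).det).divX.divX.eval (w - z)
          * (w - z) ^ 2 from rfl]
    rw [← Matrix.det_one_add_smul (w - z) B]
    rw [eval_pp, eval_pp, ← Matrix.det_mul]
    congr 1
    rw [mul_add, mul_one, Matrix.mul_smul, hB, ← Matrix.mul_assoc,
      Matrix.mul_nonsing_inv _ (isUnit_iff_ne_zero.2 hz), Matrix.one_mul]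
    show M + w • Mᵀ = M + z • Mᵀ + (w - z) • Mᵀ
    rw [add_assoc, ← add_smul, add_sub_cancel]
  have hd1 : ((pp M).derivative).eval z = (q.derivative).eval 0 := by
    rw [key, Polynomial.derivative_comp]
    simp [Polynomial.eval_comp]
  rw [hd1, hq]
  simp [Polynomial.derivative_mul, mul_add]

lemma unit_sum (M : Matrix (Fin N) (Fin N) ℂ) (h : ∀ z : ℂ, ‖z‖ = 1 → (phi M z).det ≠ 0)
    (hN : 0 < N) {z : ℂ} (hz : ‖z‖ = 1) :
    z * ((pp M).derivative.eval z / (pp M).eval z)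
      + z⁻¹ * ((pp M).derivative.eval z⁻¹ / (pp M).eval z⁻¹) = N := by
  have hz0 : z ≠ 0 := by intro h0; rw [h0] at hz; simp at hz
  have hzi : ‖z⁻¹‖ = 1 := by rw [norm_inv, hz]; norm_num
  have hb : (pp M).eval z ≠ 0 := by rw [eval_pp]; exact h z hz
  have he : (pp M).eval z⁻¹ ≠ 0 := by rw [eval_pp]; exact h z⁻¹ hzi
  have h1 : HasDerivAt (fun w : ℂ => (pp M).eval w) ((pp M).derivative.eval z) z :=
    Polynomial.hasDerivAt _ z
  have h2 : HasDerivAt (fun w : ℂ => w ^ N * (pp M).eval w⁻¹)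
      ((N : ℂ) * z ^ (N - 1) * (pp M).eval z⁻¹
        + z ^ N * ((pp M).derivative.eval z⁻¹ * (-(z ^ 2)⁻¹))) z := by
    have ha : HasDerivAt (fun w : ℂ => w ^ N) ((N : ℂ) * z ^ (N - 1)) z := hasDerivAt_pow N z
    have hbd : HasDerivAt (fun w : ℂ => (pp M).eval w⁻¹)
        ((pp M).derivative.eval z⁻¹ * (-(z ^ 2)⁻¹)) z :=
      (Polynomial.hasDerivAt (pp M) z⁻¹).comp z (hasDerivAt_inv hz0)
    exact ha.mul hbd
  have hev : (fun w : ℂ => (pp M).eval w) =ᶠ[nhds z] fun w : ℂ => w ^ N * (pp M).eval w⁻¹ := by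
    filter_upwards [eventually_ne_nhds hz0] with w hw
    exact pp_funext M hw
  have key := h1.unique (h2.congr_of_eventuallyEq hev)
  have hfe : (pp M).eval z = z ^ N * (pp M).eval z⁻¹ := pp_funext M hz0
  have hpow : z ^ N = z * z ^ (N - 1) := by
    conv_lhs => rw [← Nat.succ_pred_eq_of_pos hN]
    rw [pow_succ']
    norm_num [Nat.pred_eq_sub_one]
  have ht : z ^ (N - 1) ≠ 0 := pow_ne_zero _ hz0
  rw [hpow] at hfe
  set y := z⁻¹ with hy0
  have hy : z * y = 1 := mul_inv_cancel₀ hz0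
  rw [← inv_pow] at key
  simp only [mul_div_assoc']
  rw [div_add_div _ _ hb he, div_eq_iff (mul_ne_zero hb he), key, hfe, hpow]
  linear_combination (-(z * z ^ (N - 1) * Polynomial.eval y (derivative (pp M)) * y *
    Polynomial.eval y (pp M))) * hy

lemma integral_logderiv (M : Matrix (Fin N) (Fin N) ℂ)
    (h : ∀ z : ℂ, ‖z‖ = 1 → (phi M z).det ≠ 0) (hN : 0 < N) :
    (∮ z in C(0, 1), ((pp M).derivative.eval z / (pp M).eval z))
      = (Real.pi : ℂ) * N * Complex.I := by
  set k : ℝ → ℂ := fun θ => deriv (circleMap 0 1) θ •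
    ((pp M).derivative.eval (circleMap 0 1 θ) / (pp M).eval (circleMap 0 1 θ)) with hk
  have hmem : ∀ θ : ℝ, ‖circleMap 0 1 θ‖ = 1 := by
    intro θ; rw [norm_circleMap_zero]; norm_num
  have hkcont : Continuous k := by
    simp only [hk, deriv_circleMap]
    apply Continuous.fun_smul
    · exact (continuous_circleMap 0 1).mul continuous_const
    · apply Continuous.div
      · exact (Polynomial.continuous _).comp (continuous_circleMap 0 1)
      · exact (Polynomial.continuous _).comp (continuous_circleMap 0 1)
      · intro θ; rw [eval_pp]; exact h _ (hmem θ)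
  have hkper : Function.Periodic k (2 * Real.pi) := by
    intro θ
    simp only [hk, deriv_circleMap, periodic_circleMap 0 1 θ]
  have hinv : ∀ θ : ℝ, circleMap 0 1 (-θ) = (circleMap 0 1 θ)⁻¹ := by
    intro θ
    simp only [circleMap_zero, Complex.ofReal_neg, neg_mul, Complex.exp_neg,
      Complex.ofReal_one, one_mul]
  have hsum : ∀ θ : ℝ, k θ = (N : ℂ) * Complex.I - k (-θ) := by
    intro θ
    have := unit_sum M h hN (hmem θ)
    rw [eq_sub_iff_add_eq]
    simp only [hk, deriv_circleMap, hinv θ, smul_eq_mul]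
    calc circleMap 0 1 θ * Complex.I *
          ((pp M).derivative.eval (circleMap 0 1 θ) / (pp M).eval (circleMap 0 1 θ))
        + (circleMap 0 1 θ)⁻¹ * Complex.I *
          ((pp M).derivative.eval (circleMap 0 1 θ)⁻¹ / (pp M).eval (circleMap 0 1 θ)⁻¹)
        = Complex.I * (circleMap 0 1 θ *
            ((pp M).derivative.eval (circleMap 0 1 θ) / (pp M).eval (circleMap 0 1 θ))
          + (circleMap 0 1 θ)⁻¹ *
            ((pp M).derivative.eval (circleMap 0 1 θ)⁻¹ / (pp M).eval (circleMap 0 1 θ)⁻¹)) := by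
          ring
      _ = (N : ℂ) * Complex.I := by rw [this]; ring
  have hI : (∮ z in C(0, 1), ((pp M).derivative.eval z / (pp M).eval z))
      = ∫ θ in (0 : ℝ)..(2 * Real.pi), k θ := rfl
  have hneg : (∫ θ in (0 : ℝ)..(2 * Real.pi), k (-θ))
      = ∫ θ in (0 : ℝ)..(2 * Real.pi), k θ := by
    rw [intervalIntegral.integral_comp_neg, neg_zero]
    have := hkper.intervalIntegral_add_eq (-(2 * Real.pi)) 0
    simpa using this
  have hsplit : (∫ θ in (0 : ℝ)..(2 * Real.pi), k θ)
      = ∫ θ in (0 : ℝ)..(2 * Real.pi), ((N : ℂ) * Complex.I - k (-θ)) :=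
    intervalIntegral.integral_congr fun θ _ => hsum θ
  have hint : IntervalIntegrable (fun θ : ℝ => k (-θ)) volume 0 (2 * Real.pi) :=
    (hkcont.comp continuous_neg).intervalIntegrable _ _
  rw [intervalIntegral.integral_sub intervalIntegrable_const hint,
    intervalIntegral.integral_const, hneg] at hsplit
  rw [hI]
  have h2 : (∫ θ in (0 : ℝ)..(2 * Real.pi), k θ) + (∫ θ in (0 : ℝ)..(2 * Real.pi), k θ)
      = (2 * Real.pi - 0 : ℝ) • ((N : ℂ) * Complex.I) := by
    linear_combination hsplit
  rw [sub_zero, real_smul] at h2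
  push_cast at h2 ⊢
  linear_combination h2 / 2

lemma inv_eq_ring_inverse (M : Matrix (Fin N) (Fin N) ℂ) :
    (fun z : ℂ => (phi M z)⁻¹) = fun z : ℂ => Ring.inverse (phi M z) := by
  funext z
  exact Matrix.nonsing_inv_eq_ringInverse _

lemma diff_inv (M : Matrix (Fin N) (Fin N) ℂ) {z : ℂ} (hz : (phi M z).det ≠ 0) :
    DifferentiableAt ℂ (fun z : ℂ => (phi M z)⁻¹) z := by
  rw [inv_eq_ring_inverse]
  apply DifferentiableAt.inverse
  · exact (differentiableAt_id.smul_const Mᵀ).const_add M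
  · exact isUnit_phi hz

lemma norm_circleMap {R : ℝ} (hR : 0 ≤ R) (θ : ℝ) : ‖circleMap 0 R θ‖ = R := by
  rw [norm_circleMap_zero, _root_.abs_of_nonneg hR]

lemma cont_inv (M : Matrix (Fin N) (Fin N) ℂ) {R : ℝ} (hR : 0 ≤ R)
    (h : ∀ z : ℂ, ‖z‖ = R → (phi M z).det ≠ 0) :
    Continuous fun θ : ℝ => (phi M (circleMap 0 R θ))⁻¹ := by
  rw [continuous_iff_continuousAt]
  intro θ
  exact (diff_inv M (h _ (norm_circleMap hR θ))).continuousAt.comp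
    (continuous_circleMap 0 R).continuousAt

lemma exists_annulus (M : Matrix (Fin N) (Fin N) ℂ)
    (h : ∀ z : ℂ, ‖z‖ = 1 → (phi M z).det ≠ 0) :
    ∃ r : ℝ, 0 < r ∧ r < 1 ∧ ∀ z : ℂ, r ≤ ‖z‖ → ‖z‖ ≤ 1 → (phi M z).det ≠ 0 := by
  have hp0 : pp M ≠ 0 := by
    intro h0
    have := eval_pp M 1
    rw [h0] at this
    simp only [Polynomial.eval_zero] at this
    exact h 1 (by simp) this.symm
  have hfin : {z : ℂ | (pp M).IsRoot z}.Finite := Polynomial.finite_setOf_isRoot hp0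
  set T : Finset ℝ := (hfin.toFinset.image fun z => ‖z‖).filter (fun t => t < 1) with hT
  set S : Finset ℝ := insert (1 / 2 : ℝ) T with hS
  have hSne : S.Nonempty := ⟨1 / 2, Finset.mem_insert_self _ _⟩
  set ρ : ℝ := S.max' hSne with hρ
  have hρ1 : ρ < 1 := by
    have hmem := S.max'_mem hSne
    rcases Finset.mem_insert.1 hmem with h1 | h1
    · rw [hρ] at *; rw [h1]; norm_num
    · have := (Finset.mem_filter.1 h1).2
      exact this
  have hρhalf : (1 / 2 : ℝ) ≤ ρ := Finset.le_max' _ _ (Finset.mem_insert_self _ _)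
  refine ⟨(ρ + 1) / 2, by linarith, by linarith, ?_⟩
  intro z hz1 hz2 hz0
  have hroot : z ∈ hfin.toFinset := by
    rw [Set.Finite.mem_toFinset]
    show (pp M).eval z = 0
    rw [eval_pp]
    exact hz0
  rcases lt_or_eq_of_le hz2 with hlt | heq
  · have : ‖z‖ ∈ T := by
      rw [hT, Finset.mem_filter]
      exact ⟨Finset.mem_image_of_mem _ hroot, hlt⟩
    have : ‖z‖ ≤ ρ := Finset.le_max' _ _ (Finset.mem_insert_of_mem this)
    linarith
  · exact h z heq hz0

lemma circle_shrink (M : Matrix (Fin N) (Fin N) ℂ) {r : ℝ} (hr0 : 0 < r) (hr1 : r ≤ 1)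
    (hunit : ∀ z : ℂ, r ≤ ‖z‖ → ‖z‖ ≤ 1 → (phi M z).det ≠ 0) :
    (∮ z in C(0, 1), (phi M z)⁻¹) = ∮ z in C(0, r), (phi M z)⁻¹ := by
  have hd : ∀ z ∈ (closedBall (0 : ℂ) 1 \ ball 0 r) \ (∅ : Set ℂ),
      DifferentiableAt ℂ (fun z : ℂ => (phi M z)⁻¹) z := by
    rintro z ⟨⟨hz1, hz2⟩, -⟩
    rw [mem_closedBall, dist_zero_right] at hz1
    rw [mem_ball, dist_zero_right, not_lt] at hz2
    exact diff_inv M (hunit z hz2 hz1)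
  apply Complex.circleIntegral_eq_of_differentiable_on_annulus_off_countable hr0 hr1
    Set.countable_empty
  · intro z hz
    exact ((hd z ⟨hz, Set.notMem_empty z⟩).continuousAt).continuousWithinAt
  · intro z hz
    refine hd z ⟨⟨?_, ?_⟩, hz.2⟩
    · exact ball_subset_closedBall hz.1.1
    · intro hmem
      exact hz.1.2 (ball_subset_closedBall hmem)

lemma clm_circleIntegral {E F : Type*} [NormedAddCommGroup E] [NormedSpace ℂ E] [CompleteSpace E]
    [NormedAddCommGroup F] [NormedSpace ℂ F] [CompleteSpace F]
    (L : E →L[ℂ] F) {f : ℂ → E} {c : ℂ} {R : ℝ} (hf : CircleIntegrable f c R) :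
    L (∮ z in C(c, R), f z) = ∮ z in C(c, R), L (f z) := by
  simp only [circleIntegral]
  rw [← L.intervalIntegral_comp_comm hf.out]
  congr 1
  funext θ
  rw [L.map_smul]

lemma integral_swap_cont {E : Type*} [NormedAddCommGroup E] [NormedSpace ℝ E] [CompleteSpace E]
    (a b : ℝ) (hab : a ≤ b) (G : ℝ → ℝ → E)
    (hG : Continuous fun p : ℝ × ℝ => G p.1 p.2) :
    (∫ θ in a..b, ∫ φ in a..b, G θ φ) = ∫ φ in a..b, ∫ θ in a..b, G θ φ := by
  have hint : Integrable (Function.uncurry G)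
      ((volume.restrict (Set.Ioc a b)).prod (volume.restrict (Set.Ioc a b))) := by
    rw [MeasureTheory.Measure.prod_restrict]
    have h1 : IntegrableOn (Function.uncurry G) (Set.Icc a b ×ˢ Set.Icc a b)
        (volume.prod volume) := by
      rw [← MeasureTheory.Measure.volume_eq_prod]
      exact ContinuousOn.integrableOn_compact (isCompact_Icc.prod isCompact_Icc)
        hG.continuousOn
    exact h1.mono_set (Set.prod_mono Set.Ioc_subset_Icc_self Set.Ioc_subset_Icc_self)
  simp only [intervalIntegral.integral_of_le hab]
  exact MeasureTheory.integral_integral_swap hint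

lemma circle_swap {E : Type*} [NormedAddCommGroup E] [NormedSpace ℂ E] [CompleteSpace E]
    (R1 R2 : ℝ) (F : ℂ → ℂ → E)
    (hF : Continuous fun p : ℝ × ℝ => F (circleMap 0 R1 p.1) (circleMap 0 R2 p.2)) :
    (∮ z in C(0, R1), ∮ w in C(0, R2), F z w) = ∮ w in C(0, R2), ∮ z in C(0, R1), F z w := by
  have h2π : (0 : ℝ) ≤ 2 * Real.pi := by positivity
  have hcont : Continuous fun p : ℝ × ℝ =>
      (circleMap 0 R1 p.1 * Complex.I) • (circleMap 0 R2 p.2 * Complex.I) •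
        F (circleMap 0 R1 p.1) (circleMap 0 R2 p.2) := by
    apply Continuous.smul
    · exact (((continuous_circleMap 0 R1).comp continuous_fst).mul continuous_const)
    · apply Continuous.smul
      · exact (((continuous_circleMap 0 R2).comp continuous_snd).mul continuous_const)
      · exact hF
  simp only [circleIntegral, deriv_circleMap]
  simp_rw [← intervalIntegral.integral_smul]
  rw [integral_swap_cont _ _ h2π _ hcont]
  apply intervalIntegral.integral_congr
  intro φ _
  apply intervalIntegral.integral_congr
  intro θ _
  exact smul_comm _ _ _

lemma key_integral (M : Matrix (Fin N) (Fin N) ℂ)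
    (h : ∀ z : ℂ, ‖z‖ = 1 → (phi M z).det ≠ 0) {r : ℝ} (hr0 : 0 < r) (hr1 : r < 1)
    (hann : ∀ z : ℂ, r ≤ ‖z‖ → ‖z‖ ≤ 1 → (phi M z).det ≠ 0) :
    (∮ z in C(0, 1), (phi M z)⁻¹) * (Mᵀ * (∮ w in C(0, r), (phi M w)⁻¹))
      = (2 * Real.pi * Complex.I : ℂ) • (∮ w in C(0, r), (phi M w)⁻¹) := by
  set g : ℂ → Matrix (Fin N) (Fin N) ℂ := fun z => (phi M z)⁻¹ with hg
  have hdet_r : ∀ w : ℂ, ‖w‖ = r → (phi M w).det ≠ 0 := fun w hw =>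
    hann w (le_of_eq hw.symm) (hw ▸ hr1.le)
  have hcont1 : ContinuousOn g (sphere (0 : ℂ) 1) := fun z hz =>
    (diff_inv M (h z (mem_sphere_zero_iff_norm.mp hz))).continuousAt.continuousWithinAt
  have hcontr : ContinuousOn g (sphere (0 : ℂ) r) := fun w hw =>
    (diff_inv M (hdet_r w (mem_sphere_zero_iff_norm.mp hw))).continuousAt.continuousWithinAt
  have hint1 : CircleIntegrable g 0 1 := hcont1.circleIntegrable (by norm_num)
  have hintr : CircleIntegrable g 0 r := hcontr.circleIntegrable hr0.le
  set Qr : Matrix (Fin N) (Fin N) ℂ := ∮ w in C(0, r), g w with hQr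
  set K : ℂ → Matrix (Fin N) (Fin N) ℂ := fun z => ∮ w in C(0, r), (w - z)⁻¹ • g w with hK
  -- Step B : pull the constant right factor inside
  have stepB : (∮ z in C(0, 1), g z) * (Mᵀ * Qr)
      = ∮ z in C(0, 1), g z * (Mᵀ * Qr) := by
    have h0 := clm_circleIntegral
      (LinearMap.toContinuousLinearMap (LinearMap.mulRight ℂ (Mᵀ * Qr))) hint1
    simp only [LinearMap.coe_toContinuousLinearMap', LinearMap.mulRight_apply] at h0
    exact h0
  -- Step C : pointwise evaluation on the unit circle
  have stepC : ∀ z : ℂ, ‖z‖ = 1 → g z * (Mᵀ * Qr) = (-1 : ℂ) • K z := by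
    intro z hz
    have hUz : (phi M z).det ≠ 0 := h z hz
    have c2 : g z * (Mᵀ * Qr) = ∮ w in C(0, r), (g z * Mᵀ) * g w := by
      rw [← Matrix.mul_assoc]
      have h0 := clm_circleIntegral
        (LinearMap.toContinuousLinearMap (LinearMap.mulLeft ℂ (g z * Mᵀ))) hintr
      simp only [LinearMap.coe_toContinuousLinearMap', LinearMap.mulLeft_apply] at h0
      exact h0
    have c3 : (∮ w in C(0, r), (g z * Mᵀ) * g w)
        = ∮ w in C(0, r), ((w - z)⁻¹ • g z - (w - z)⁻¹ • g w) := by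
      apply circleIntegral.integral_congr hr0.le
      intro w hw
      have hwr : ‖w‖ = r := mem_sphere_zero_iff_norm.mp hw
      have hUw : (phi M w).det ≠ 0 := hdet_r w hwr
      have hne : w ≠ z := by
        intro hwz; rw [hwz, hz] at hwr; exact absurd hwr.symm hr1.ne
      have hsub : w - z ≠ 0 := sub_ne_zero_of_ne hne
      have hres := resolvent_id M (isUnit_phi hUz) (isUnit_phi hUw)
      show (g z * Mᵀ) * g w = (w - z)⁻¹ • g z - (w - z)⁻¹ • g w
      simp only [hg]
      rw [← smul_sub, hres, smul_smul, inv_mul_cancel₀ hsub, one_smul, Matrix.mul_assoc]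
    have c4a : CircleIntegrable (fun w : ℂ => (w - z)⁻¹ • g z) 0 r := by
      apply ContinuousOn.circleIntegrable hr0.le
      apply ContinuousOn.fun_smul _ continuousOn_const
      apply ContinuousOn.inv₀ ((continuous_sub_right z).continuousOn)
      intro w hw
      have hwr : ‖w‖ = r := mem_sphere_zero_iff_norm.mp hw
      refine sub_ne_zero_of_ne fun hwz => ?_
      rw [hwz, hz] at hwr; exact absurd hwr.symm hr1.ne
    have c4b : CircleIntegrable (fun w : ℂ => (w - z)⁻¹ • g w) 0 r := by
      apply ContinuousOn.circleIntegrable hr0.le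
      apply ContinuousOn.fun_smul _ hcontr
      apply ContinuousOn.inv₀ ((continuous_sub_right z).continuousOn)
      intro w hw
      have hwr : ‖w‖ = r := mem_sphere_zero_iff_norm.mp hw
      refine sub_ne_zero_of_ne fun hwz => ?_
      rw [hwz, hz] at hwr; exact absurd hwr.symm hr1.ne
    have c5 : (∮ w in C(0, r), (w - z)⁻¹) = 0 := by
      apply Complex.circleIntegral_eq_zero_of_differentiable_on_off_countable hr0.le
        Set.countable_empty
      · apply ContinuousOn.inv₀ ((continuous_sub_right z).continuousOn)
        intro w hw
        rw [mem_closedBall, dist_zero_right] at hw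
        refine sub_ne_zero_of_ne fun hwz => ?_
        rw [hwz, hz] at hw; linarith
      · intro w hw
        rw [Set.diff_empty, mem_ball, dist_zero_right] at hw
        have hne : w - z ≠ 0 := by
          refine sub_ne_zero_of_ne fun hwz => ?_
          rw [hwz, hz] at hw; linarith
        exact ((differentiableAt_id.sub_const z).inv hne)
    rw [c2, c3, circleIntegral.integral_sub c4a c4b,
      circleIntegral.integral_smul_const, c5, zero_smul, zero_sub, neg_smul, one_smul]
  -- Step D/E/F/G : swap and evaluate
  have hKswap : (∮ z in C(0, 1), K z)
      = ∮ w in C(0, r), ∮ z in C(0, 1), (w - z)⁻¹ • g w := by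
    apply circle_swap 1 r (fun z w => (w - z)⁻¹ • g w)
    apply Continuous.fun_smul
    · apply Continuous.inv₀
      · exact ((continuous_circleMap 0 r).comp continuous_snd).sub
          ((continuous_circleMap 0 1).comp continuous_fst)
      · intro p
        refine sub_ne_zero_of_ne fun hwz => ?_
        have h1 : ‖circleMap 0 r p.2‖ = r := norm_circleMap hr0.le p.2
        have h2 : ‖circleMap 0 1 p.1‖ = 1 := norm_circleMap (by norm_num) p.1
        rw [hwz, h2] at h1; exact hr1.ne h1.symm
    · exact (cont_inv M hr0.le hdet_r).comp continuous_snd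
  have hinner : ∀ w : ℂ, ‖w‖ = r →
      (∮ z in C(0, 1), (w - z)⁻¹ • g w) = (2 * Real.pi * Complex.I : ℂ) • ((-1 : ℂ) • g w) := by
    intro w hw
    have heq : ∀ z : ℂ, (w - z)⁻¹ • g w = (z - w)⁻¹ • ((-1 : ℂ) • g w) := by
      intro z
      rw [← neg_sub z w, inv_neg, neg_smul, neg_one_smul, smul_neg]
    calc (∮ z in C(0, 1), (w - z)⁻¹ • g w)
        = ∮ z in C(0, 1), (z - w)⁻¹ • ((-1 : ℂ) • g w) := by
          apply circleIntegral.integral_congr (by norm_num : (0:ℝ) ≤ 1)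
          intro z _; exact heq z
      _ = (∮ z in C(0, 1), (z - w)⁻¹) • ((-1 : ℂ) • g w) :=
          circleIntegral.integral_smul_const _ _ _ _
      _ = (2 * Real.pi * Complex.I : ℂ) • ((-1 : ℂ) • g w) := by
          rw [circleIntegral.integral_sub_inv_of_mem_ball]
          rw [mem_ball_zero_iff, hw]; exact hr1
  calc (∮ z in C(0, 1), g z) * (Mᵀ * Qr)
      = ∮ z in C(0, 1), g z * (Mᵀ * Qr) := stepB
    _ = ∮ z in C(0, 1), (-1 : ℂ) • K z := by
        apply circleIntegral.integral_congr (by norm_num : (0:ℝ) ≤ 1)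
        intro z hz; exact stepC z (mem_sphere_zero_iff_norm.mp hz)
    _ = (-1 : ℂ) • ∮ z in C(0, 1), K z := circleIntegral.integral_smul _ _ _ _
    _ = (-1 : ℂ) • ∮ w in C(0, r), ∮ z in C(0, 1), (w - z)⁻¹ • g w := by rw [hKswap]
    _ = (-1 : ℂ) • ∮ w in C(0, r), (2 * Real.pi * Complex.I : ℂ) • ((-1 : ℂ) • g w) := by
        congr 1
        apply circleIntegral.integral_congr hr0.le
        intro w hw; exact hinner w (mem_sphere_zero_iff_norm.mp hw)
    _ = (2 * Real.pi * Complex.I : ℂ) • Qr := by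
        rw [circleIntegral.integral_smul, circleIntegral.integral_smul]
        rw [smul_smul, smul_smul, hQr]
        norm_num

lemma rank_eq_trace {P : Matrix (Fin N) (Fin N) ℂ} (hP : P * P = P) :
    (P.rank : ℂ) = Matrix.trace P := by
  set f := P.mulVecLin with hfdef
  have hf : f ∘ₗ f = f := by
    rw [hfdef, ← Matrix.mulVecLin_mul, hP]
  have hproj : LinearMap.IsProj (LinearMap.range f) f := by
    constructor
    · intro x; exact LinearMap.mem_range_self _ x
    · rintro x ⟨y, rfl⟩
      exact DFunLike.congr_fun hf y
  have ht := hproj.trace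
  have htr : LinearMap.trace ℂ (Fin N → ℂ) f = Matrix.trace P := by
    rw [LinearMap.trace_eq_matrix_trace ℂ (Pi.basisFun ℂ (Fin N)) f,
      LinearMap.toMatrix_eq_toMatrix', hfdef, ← Matrix.toLin'_apply',
      LinearMap.toMatrix'_toLin']
  rw [← htr, ht]
  rfl

lemma trace_integral (M : Matrix (Fin N) (Fin N) ℂ)
    (h : ∀ z : ℂ, ‖z‖ = 1 → (phi M z).det ≠ 0) (hN : 0 < N) :
    Matrix.trace ((∮ z in C(0, 1), (phi M z)⁻¹) * Mᵀ)
      = (Real.pi : ℂ) * N * Complex.I := by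
  have hcont1 : ContinuousOn (fun z : ℂ => (phi M z)⁻¹) (sphere (0 : ℂ) 1) := fun z hz =>
    (diff_inv M (h z (mem_sphere_zero_iff_norm.mp hz))).continuousAt.continuousWithinAt
  have hint1 : CircleIntegrable (fun z : ℂ => (phi M z)⁻¹) 0 1 :=
    hcont1.circleIntegrable (by norm_num)
  have h0 := clm_circleIntegral (LinearMap.toContinuousLinearMap
    ((Matrix.traceLinearMap (Fin N) ℂ ℂ).comp (LinearMap.mulRight ℂ Mᵀ))) hint1
  simp only [LinearMap.coe_toContinuousLinearMap', LinearMap.comp_apply,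
    LinearMap.mulRight_apply, Matrix.traceLinearMap_apply] at h0
  rw [h0]
  rw [← integral_logderiv M h hN]
  apply circleIntegral.integral_congr (by norm_num : (0:ℝ) ≤ 1)
  intro z hz
  have hz1 : ‖z‖ = 1 := mem_sphere_zero_iff_norm.mp hz
  have hb : (pp M).eval z ≠ 0 := by rw [eval_pp]; exact h z hz1
  have := jacobi M (h z hz1)
  show Matrix.trace ((phi M z)⁻¹ * Mᵀ) = (pp M).derivative.eval z / (pp M).eval z
  rw [this, mul_comm, mul_div_assoc, div_self hb, mul_one]

end IRP

/-- for a non-critical ⊤-palindromic pencil `φ(z) = M + z Mᵀ`, the matrix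
`P = 𝓘(M) Mᵀ`, where `𝓘(M) = (2πi)⁻¹ ∮_{|z|=1} φ(z)⁻¹ dz`, is an idempotent of rank n
(the orthogonal projector onto the stable deflating subspace). -/
theorem integral_representation_projector
    (n : ℕ) (M : Matrix (Fin (2 * n)) (Fin (2 * n)) ℂ)
    (h : ∀ z : ℂ, ‖z‖ = 1 → (M + z • Mᵀ).det ≠ 0) :
    ∀ P : Matrix (Fin (2 * n)) (Fin (2 * n)) ℂ,
      P = ((2 * Real.pi * Complex.I : ℂ)⁻¹ •
            (∮ z in C(0, 1), (M + z • Mᵀ)⁻¹)) * Mᵀ →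
      P * P = P ∧ P.rank = n := by
  intro P hP
  have h' : ∀ z : ℂ, ‖z‖ = 1 → (IRP.phi M z).det ≠ 0 := h
  have hτ : (2 * (Real.pi : ℂ) * Complex.I) ≠ 0 :=
    mul_ne_zero (mul_ne_zero two_ne_zero (Complex.ofReal_ne_zero.2 Real.pi_ne_zero))
      Complex.I_ne_zero
  obtain ⟨r, hr0, hr1, hann⟩ := IRP.exists_annulus M h'
  have hcauchy := IRP.circle_shrink M hr0 hr1.le hann
  have hkey := IRP.key_integral M h' hr0 hr1 hann
  rw [← hcauchy] at hkey
  set Q : Matrix (Fin (2 * n)) (Fin (2 * n)) ℂ := ∮ z in C(0, 1), (IRP.phi M z)⁻¹ with hQ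
  have hP' : P = ((2 * Real.pi * Complex.I : ℂ)⁻¹ • Q) * Mᵀ := hP
  have hidem : P * P = P := by
    rw [hP']
    have e1 : ((2 * Real.pi * Complex.I : ℂ)⁻¹ • Q) * Mᵀ *
          (((2 * Real.pi * Complex.I : ℂ)⁻¹ • Q) * Mᵀ)
        = ((2 * Real.pi * Complex.I : ℂ)⁻¹ * (2 * Real.pi * Complex.I : ℂ)⁻¹) •
          (Q * (Mᵀ * (Q * Mᵀ))) := by
      simp only [Matrix.smul_mul, Matrix.mul_smul, smul_smul, Matrix.mul_assoc]
    have e2 : Q * (Mᵀ * (Q * Mᵀ)) = (2 * Real.pi * Complex.I : ℂ) • (Q * Mᵀ) := by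
      have : (Q * (Mᵀ * Q)) * Mᵀ = Q * (Mᵀ * (Q * Mᵀ)) := by
        rw [Matrix.mul_assoc, Matrix.mul_assoc]
      rw [← this, hkey, Matrix.smul_mul]
    rw [e1, e2, smul_smul]
    have e3 : (2 * Real.pi * Complex.I : ℂ)⁻¹ * (2 * Real.pi * Complex.I : ℂ)⁻¹ *
        (2 * Real.pi * Complex.I : ℂ) = (2 * Real.pi * Complex.I : ℂ)⁻¹ := by
      field_simp
    rw [e3, ← Matrix.smul_mul]
  refine ⟨hidem, ?_⟩
  rcases Nat.eq_zero_or_pos n with hn0 | hn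
  · subst hn0
    have hle := Matrix.rank_le_card_width P
    simp only [Fintype.card_fin] at hle
    omega
  · have htr := IRP.trace_integral M h' (by omega : 0 < 2 * n)
    have hrk : (P.rank : ℂ) = Matrix.trace P := IRP.rank_eq_trace hidem
    have htrP : Matrix.trace P = (2 * (Real.pi : ℂ) * Complex.I)⁻¹ *
        ((Real.pi : ℂ) * ((2 * n : ℕ) : ℂ) * Complex.I) := by
      rw [hP', Matrix.smul_mul, Matrix.trace_smul, hQ, htr, smul_eq_mul]
    rw [htrP] at hrk
    have hval : (2 * (Real.pi : ℂ) * Complex.I)⁻¹ *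
        ((Real.pi : ℂ) * ((2 * n : ℕ) : ℂ) * Complex.I) = (n : ℂ) := by
      push_cast
      field_simp
    rw [hval] at hrk
    exact Nat.cast_inj.mp hrk
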